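/- Let (X, μ) be a measure space with μ finite, let (ω_p)_{p ∈ Fin N} be a measurable partition of X with μ(ω_p) > 0 for all p, and let φ_k : X → ℝ (k ∈ Fin N) be square-integrable functions such that the Gram (mass) matrix M with M_{kl} = ∫_X φ_k φ_l dμ is invertible and such that there is z : Fin N → ℝ with ∑_k z_k φ_k = 1 μ-almost everywhere (the span of the φ_k contains the constants). Let D be the diagonal matrix with entries μ(ω_p) and P the matrix with P_{pk} = (1/μ(ω_p)) ∫_{ω_p} φ_k dμ. Then: (i) the row vector 1ᵀ D P equals y, where y_k = ∫_X φ_k dμ; (ii) M z = y; consequently (iii) for every Φ : Fin N → ℝ, 1ᵀ (D P M^{-1} Φ) = ∑_k z_k Φ_k. (In particular, applied to the DG residual vector Φ, for which ∑_k z_k Φ_k = ∮_{∂K} f̂·n, the weighted sum of the subcell-average updates recovers exactly the boundary flux integral.) -/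

import Mathlib

open MeasureTheory

/-- **Global conservation of the subcell reformulation of a DG scheme.**
With a measurable partition `(ω_p)` of positive measure, square-integrable
basis functions `φ_k` whose span contains the constants (`∑ z_k φ_k = 1`
a.e.) and invertible Gram matrix `M`, the diagonal matrix `D` of the measures
and the subcell-average matrix `P` satisfy: the ones row-vector times `D P`
is the vector of integrals `y_k = ∫ φ_k`, `M z = y`, and consequently
`1ᵀ (D P M⁻¹ Φ) = ∑ z_k Φ_k` for every residual vector `Φ`. -/
theorem dg_subcell_global_conservation
    {X : Type*} [MeasurableSpace X] (μ : Measure X) [IsFiniteMeasure μ]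
    (N : ℕ) (ω : Fin N → Set X)
    (hmeas : ∀ p, MeasurableSet (ω p))
    (hdisj : Pairwise fun p q => Disjoint (ω p) (ω q))
    (hcover : (⋃ p, ω p) = Set.univ)
    (hpos : ∀ p, 0 < μ (ω p))
    (φ : Fin N → X → ℝ)
    (hφ : ∀ k, MemLp (φ k) 2 μ)
    (M : Matrix (Fin N) (Fin N) ℝ)
    (hM : ∀ k l, M k l = ∫ x, φ k x * φ l x ∂μ)
    (hMunit : IsUnit M)
    (z : Fin N → ℝ)
    (hz : ∀ᵐ x ∂μ, ∑ k, z k * φ k x = 1)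
    (D P : Matrix (Fin N) (Fin N) ℝ)
    (hD : D = Matrix.diagonal fun p => (μ (ω p)).toReal)
    (hP : ∀ p k, P p k = ((μ (ω p)).toReal)⁻¹ * ∫ x in ω p, φ k x ∂μ) :
    (Matrix.vecMul (fun _ => (1 : ℝ)) (D * P) = fun k => ∫ x, φ k x ∂μ)
    ∧ (M.mulVec z = fun k => ∫ x, φ k x ∂μ)
    ∧ (∀ Φ : Fin N → ℝ, ∑ p, (D * P * M⁻¹).mulVec Φ p = ∑ k, z k * Φ k) := by
  -- integrability facts
  have hint : ∀ k, Integrable (φ k) μ := fun k => (hφ k).integrable one_le_two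
  have hmul : ∀ k l, Integrable (fun x => φ k x * φ l x) μ := by
    intro k l
    have h : MemLp (φ k • φ l) 1 μ :=
      (hφ l).smul (hφ k) (hpqr := ⟨by simp only [one_div, inv_one]; rw [ENNReal.inv_two_add_inv_two]⟩)
    rw [memLp_one_iff_integrable] at h
    exact h
  -- (i)
  have h1 : Matrix.vecMul (fun _ => (1 : ℝ)) (D * P) = fun k => ∫ x, φ k x ∂μ := by
    funext k
    have hDP : ∀ p, (D * P) p k = ∫ x in ω p, φ k x ∂μ := by
      intro p
      have hμ : ((μ (ω p)).toReal) ≠ 0 :=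
        ENNReal.toReal_ne_zero.2 ⟨(hpos p).ne', measure_ne_top μ _⟩
      simp [hD, hP, Matrix.mul_apply, Matrix.diagonal, Finset.sum_ite_eq,
        ← mul_assoc, mul_inv_cancel₀ hμ]
    have hsplit : ∫ x, φ k x ∂μ = ∑ p, ∫ x in ω p, φ k x ∂μ := by
      rw [← integral_iUnion_fintype hmeas hdisj (fun p => (hint k).integrableOn), hcover,
        Measure.restrict_univ]
    simp only [Matrix.vecMul, dotProduct, one_mul, hDP]
    exact hsplit.symm
  -- (ii)
  have h2 : M.mulVec z = fun k => ∫ x, φ k x ∂μ := by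
    funext k
    have : ∀ l, M k l * z l = ∫ x, z l * (φ k x * φ l x) ∂μ := by
      intro l
      rw [hM, integral_const_mul, mul_comm]
    simp only [Matrix.mulVec, dotProduct, this]
    rw [← integral_finset_sum]
    · apply integral_congr_ae
      filter_upwards [hz] with x hx
      have : ∑ l, z l * (φ k x * φ l x) = φ k x * ∑ l, z l * φ l x := by
        rw [Finset.mul_sum]; apply Finset.sum_congr rfl; intro l _; ring
      rw [this, hx, mul_one]
    · exact fun l _ => (hmul k l).const_mul (z l)
  refine ⟨h1, h2, ?_⟩
  -- (iii)
  intro Φ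
  have hinv : Matrix.vecMul (fun k => ∫ x, φ k x ∂μ) M⁻¹ = z := by
    have hy : Matrix.vecMul z M = fun k => ∫ x, φ k x ∂μ := by
      rw [← h2]
      funext k
      simp only [Matrix.vecMul, Matrix.mulVec, dotProduct]
      apply Finset.sum_congr rfl
      intro l _
      rw [hM, hM]
      rw [mul_comm]
      congr 1
      apply integral_congr_ae
      filter_upwards with x
      ring
    rw [← hy, Matrix.vecMul_vecMul, Matrix.mul_nonsing_inv _ ((Matrix.isUnit_iff_isUnit_det M).mp hMunit), Matrix.vecMul_one]
  calc ∑ p, (D * P * M⁻¹).mulVec Φ p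
      = dotProduct (Matrix.vecMul (fun _ => (1:ℝ)) (D * P * M⁻¹)) Φ := by
        simp [dotProduct, Matrix.vecMul, Matrix.mulVec, Finset.mul_sum, Finset.sum_mul,
          mul_assoc]
        rw [Finset.sum_comm]
    _ = ∑ k, z k * Φ k := by
        rw [← Matrix.vecMul_vecMul, h1, hinv, dotProduct]
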